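/- Let l ≥ 1, let w_1, ..., w_l be pairwise distinct elements of a field with each w_j ≠ 1, and suppose the values w_j/(w_j - 1) are pairwise distinct. If c_0, c_1, ..., c_{l-1} are field elements satisfying Σ_{i=0}^{l-1} c_{l-1-i} · (w_j/(w_j-1))^i = w_j − 1 for all j = 1, ..., l, then c_0 = −Π_{j=1}^l (1 − w_j). -/
import Mathlib


open Finset

/-- `π` never goes above `P`: every prefix of `π` contains at most as many `N` steps
(`true`) as the corresponding prefix of `P`. -/
def NotAbove (π P : List Bool) : Prop :=
  ∀ j ∈ Finset.range (P.length + 1), (π.take j).count true ≤ (P.take j).count true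

instance (π P : List Bool) : Decidable (NotAbove π P) := by
  unfold NotAbove; infer_instance

/-- The lattice paths (encoded as functions `Fin P.length → Bool`, with `true` = North
and `false` = East) from `(0,0)` to the endpoint of `P` that never go above `P`. -/
def pathsBelow (P : List Bool) : Finset (Fin P.length → Bool) :=
  Finset.univ.filter fun f =>
    (List.ofFn f).count true = P.count true ∧ NotAbove (List.ofFn f) P

/-- The word `(N^k E^l)^n`. -/
def zigzag (k l n : ℕ) : List Bool :=
  (List.replicate n (List.replicate k true ++ List.replicate l false)).flatten

/-- `e(π)`: the number of East steps of `π` before its first North step. -/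
def eStat (w : List Bool) : ℕ := (w.takeWhile fun b => b = false).length

/-- `i(π)`: the number of North steps that `π` has in common with `P`
(same position and matching prefix `N`-counts, i.e. the same lattice segment). -/
def iStat (π P : List Bool) : ℕ :=
  ((Finset.range P.length).filter fun j =>
    π.getD j false = true ∧ P.getD j false = true ∧
      (π.take j).count true = (P.take j).count true).card

/-- `W(P)(x,y) = Σ_π x^{i(π)} y^{e(π)}`, over all paths `π` not above `P`. -/
def W (P : List Bool) (x y : ℤ) : ℤ :=
  ∑ f ∈ pathsBelow P, x ^ iStat (List.ofFn f) P * y ^ eStat (List.ofFn f)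

open Polynomial

section MyAux
variable {F : Type*} [Field F] {ι : Type*} [DecidableEq ι] {s : Finset ι} {v : ι → F} {i : ι}

theorem myLeadingCoeff_basis :
    (Lagrange.basis s v i).leadingCoeff = Lagrange.nodalWeight s v i := by
  rw [Lagrange.basis, leadingCoeff_prod, Lagrange.nodalWeight]
  refine Finset.prod_congr rfl fun j hj => ?_
  rw [Lagrange.basisDivisor, leadingCoeff_mul, leadingCoeff_C,
    (monic_X_sub_C (v j)).leadingCoeff, mul_one]

theorem myCoeff_interpolate (hvs : Set.InjOn v s) (r : ι → F) :
    (Lagrange.interpolate s v r).coeff (#s - 1) = ∑ i ∈ s, r i * Lagrange.nodalWeight s v i := by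
  rw [Lagrange.interpolate_apply, finset_sum_coeff]
  refine Finset.sum_congr rfl fun i hi => ?_
  rw [coeff_C_mul]
  congr 1
  rw [← Lagrange.natDegree_basis hvs hi, ← leadingCoeff, myLeadingCoeff_basis]

theorem myCoeff_of_eval (hvs : Set.InjOn v s) (r : ι → F) {f : F[X]}
    (hdeg : f.degree < #s) (heval : ∀ i ∈ s, f.eval (v i) = r i) :
    f.coeff (#s - 1) = ∑ i ∈ s, r i * Lagrange.nodalWeight s v i := by
  rw [Lagrange.eq_interpolate_of_eval_eq r hvs hdeg heval, myCoeff_interpolate hvs]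

end MyAux


/-- solving the linear system of the tennis ball problem. -/
theorem stmt13 {F : Type*} [Field F] (l : ℕ) (hl : 1 ≤ l) (w : Fin l → F)
    (hw : Function.Injective w) (hw1 : ∀ j, w j ≠ 1)
    (hdist : Function.Injective fun j => w j / (w j - 1))
    (c : ℕ → F)
    (hc : ∀ j, ∑ i ∈ Finset.range l, c (l - 1 - i) * (w j / (w j - 1)) ^ i = w j - 1) :
    c 0 = -∏ j, (1 - w j) := by
  classical
  set x : Fin l → F := fun j => w j / (w j - 1) with hx
  have hd : ∀ j, w j - 1 ≠ 0 := fun j => sub_ne_zero_of_ne (hw1 j)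
  have hcard : #(univ : Finset (Fin l)) = l := Finset.card_univ.trans (Fintype.card_fin l)
  have hvx : Set.InjOn x (univ : Finset (Fin l)) := fun a _ b _ h => hdist h
  have hvw : Set.InjOn w (univ : Finset (Fin l)) := fun a _ b _ h => hw h
  -- the polynomial p
  set p : F[X] := ∑ i ∈ Finset.range l, C (c (l - 1 - i)) * X ^ i with hp
  have hpdeg : p.degree < (#(univ : Finset (Fin l)) : ℕ) := by
    rw [hcard]
    refine lt_of_le_of_lt (degree_sum_le _ _) ?_
    refine (Finset.sup_lt_iff (WithBot.bot_lt_coe l)).mpr fun i hi => ?_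
    exact lt_of_le_of_lt (degree_C_mul_X_pow_le _ _)
      (Nat.cast_lt.mpr (Finset.mem_range.mp hi))
  have hpeval : ∀ j ∈ (univ : Finset (Fin l)), p.eval (x j) = w j - 1 := by
    intro j _
    rw [hp, eval_finset_sum]
    simp only [eval_mul, eval_C, eval_pow, eval_X]
    exact hc j
  have hpcoeff : p.coeff (l - 1) = c 0 := by
    rw [hp, finset_sum_coeff]
    rw [Finset.sum_eq_single (l - 1)]
    · rw [coeff_C_mul, coeff_X_pow, if_pos rfl, mul_one, Nat.sub_self]
    · intro i _ hne
      rw [coeff_C_mul, coeff_X_pow, if_neg (fun h => hne h.symm), mul_zero]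
    · intro h
      exact absurd (Finset.mem_range.mpr (by omega)) h
  have key1 : c 0 = ∑ j, (w j - 1) * Lagrange.nodalWeight univ x j := by
    rw [← hpcoeff]
    have := myCoeff_of_eval hvx (fun j => w j - 1) hpdeg hpeval
    rwa [hcard] at this
  -- the polynomial q = (X - 1)^(l-1)
  set q : F[X] := (X - C 1) ^ (l - 1) with hq
  have hqdeg : q.degree < (#(univ : Finset (Fin l)) : ℕ) := by
    rw [hcard, hq, degree_pow, degree_X_sub_C, nsmul_eq_mul, mul_one]
    exact Nat.cast_lt.mpr (by omega)
  have hqeval : ∀ j ∈ (univ : Finset (Fin l)), q.eval (w j) = (w j - 1) ^ (l - 1) := by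
    intro j _; rw [hq, eval_pow, eval_sub, eval_X, eval_C]
  have hqcoeff : q.coeff (l - 1) = 1 := by
    have hdq : q.natDegree = l - 1 := by
      rw [hq, natDegree_pow, natDegree_X_sub_C, mul_one]
    rw [← hdq, ← leadingCoeff]
    exact ((monic_X_sub_C (1 : F)).pow _).leadingCoeff
  have key2 : (1 : F) = ∑ j, (w j - 1) ^ (l - 1) * Lagrange.nodalWeight univ w j := by
    have h := myCoeff_of_eval hvw (fun j => (w j - 1) ^ (l - 1)) hqdeg hqeval
    rw [hcard] at h
    exact hqcoeff.symm.trans h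
  -- relate the two nodal weights termwise
  have hterm : ∀ j, (w j - 1) * Lagrange.nodalWeight univ x j =
      ((-1) ^ (l - 1) * ∏ k, (w k - 1)) *
        ((w j - 1) ^ (l - 1) * Lagrange.nodalWeight univ w j) := by
    intro j
    have hcarde : #((univ : Finset (Fin l)).erase j) = l - 1 := by
      rw [Finset.card_erase_of_mem (mem_univ j), hcard]
    have hNW : Lagrange.nodalWeight univ x j =
        ∏ k ∈ (univ : Finset (Fin l)).erase j,
          (-(w j - w k)⁻¹ * ((w j - 1) * (w k - 1))) := by
      rw [Lagrange.nodalWeight]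
      refine Finset.prod_congr rfl fun k hk => ?_
      have hkj : k ≠ j := (Finset.mem_erase.mp hk).1
      have hwjk : w j - w k ≠ 0 := sub_ne_zero_of_ne (fun h => hkj (hw h).symm)
      have hsub : x j - x k = (w k - w j) / ((w j - 1) * (w k - 1)) := by
        rw [hx]
        rw [div_sub_div _ _ (hd j) (hd k)]
        congr 1
        ring
      rw [hsub, div_eq_mul_inv, mul_inv, inv_inv, ← neg_sub (w j) (w k), ← neg_inv]
    rw [hNW, Finset.prod_mul_distrib, Finset.prod_mul_distrib]
    have h1 : ∏ k ∈ (univ : Finset (Fin l)).erase j, -(w j - w k)⁻¹ =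
        (-1) ^ (l - 1) * Lagrange.nodalWeight univ w j := by
      rw [Lagrange.nodalWeight, ← hcarde]
      have : ∀ k ∈ (univ : Finset (Fin l)).erase j,
          -(w j - w k)⁻¹ = (-1) * (w j - w k)⁻¹ := fun k _ => by ring
      rw [Finset.prod_congr rfl this, Finset.prod_mul_distrib, Finset.prod_const]
    have h2 : ∏ _k ∈ (univ : Finset (Fin l)).erase j, (w j - 1) = (w j - 1) ^ (l - 1) := by
      rw [Finset.prod_const, hcarde]
    have h3 : (w j - 1) * ∏ k ∈ (univ : Finset (Fin l)).erase j, (w k - 1) =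
        ∏ k, (w k - 1) := Finset.mul_prod_erase univ (fun k => w k - 1) (mem_univ j)
    rw [h1, h2]
    calc (w j - 1) * ((-1) ^ (l - 1) * Lagrange.nodalWeight univ w j *
          ((w j - 1) ^ (l - 1) * ∏ k ∈ (univ : Finset (Fin l)).erase j, (w k - 1)))
        = ((-1) ^ (l - 1) * ((w j - 1) * ∏ k ∈ (univ : Finset (Fin l)).erase j, (w k - 1))) *
          ((w j - 1) ^ (l - 1) * Lagrange.nodalWeight univ w j) := by ring
      _ = _ := by rw [h3]
  have hprod : ∏ j, (1 - w j) = (-1 : F) ^ l * ∏ k, (w k - 1) := by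
    have : ∏ j : Fin l, (1 - w j) = ∏ j : Fin l, (-1) * (w j - 1) :=
      Finset.prod_congr rfl fun j _ => by ring
    rw [this, Finset.prod_mul_distrib, Finset.prod_const, hcard]
  have hpow : (-1 : F) ^ l = (-1) ^ (l - 1) * (-1) := by
    conv_lhs => rw [show l = (l - 1) + 1 by omega]
    rw [pow_succ]
  rw [key1]
  calc ∑ j, (w j - 1) * Lagrange.nodalWeight univ x j
      = ∑ j, ((-1) ^ (l - 1) * ∏ k, (w k - 1)) *
          ((w j - 1) ^ (l - 1) * Lagrange.nodalWeight univ w j) :=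
        Finset.sum_congr rfl fun j _ => hterm j
    _ = ((-1) ^ (l - 1) * ∏ k, (w k - 1)) *
          ∑ j, (w j - 1) ^ (l - 1) * Lagrange.nodalWeight univ w j := by
        rw [Finset.mul_sum]
    _ = (-1) ^ (l - 1) * ∏ k, (w k - 1) := by rw [← key2, mul_one]
    _ = -∏ j, (1 - w j) := by rw [hprod, hpow]; ring
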